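/- For all complex numbers x, y with |x| ≤ 1 and |y| ≤ 1, the fundamental form holds: −y·(a(y)·x^2 + b(y)·x + c(y))·P(x,y) = (1−p)(q·y+1−q)·((mu_h−mu_l)·x·y − mu_h·y + mu_l·x)·psi_0(y) + (1−p)(1−q)·mu_l·(y−1)·x·pi_{0,0}. -/

import Mathlib

/-- The balance equations of the discrete-time preemptive priority queue
(early arrival system). -/
def BalanceEquations (p q mh ml : ℝ) (pi : ℕ → ℕ → ℝ) : Prop :=
  ((1 - ((1-p)*(1-q) + p*(1-q)*mh + (1-p)*q*ml)) * pi 0 0 =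
      (1-p)*(1-q)*mh * pi 1 0 + (1-p)*(1-q)*ml * pi 0 1) ∧
  (∀ i : ℕ, 1 ≤ i →
    (1 - ((1-p)*(1-q)*(1-mh) + p*(1-q)*mh)) * pi i 0 =
      p*(1-q)*(1-mh) * pi (i-1) 0 + (1-p)*(1-q)*mh * pi (i+1) 0) ∧
  (∀ j : ℕ, 1 ≤ j →
    (1 - ((1-p)*(1-q)*(1-ml) + p*(1-q)*mh + (1-p)*q*ml)) * pi 0 j =
      (p*q*mh + (1-p)*q*(1-ml)) * pi 0 (j-1) + (1-p)*(1-q)*ml * pi 0 (j+1) +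
      (1-p)*q*mh * pi 1 (j-1) + (1-p)*(1-q)*mh * pi 1 j) ∧
  (∀ i j : ℕ, 1 ≤ i → 1 ≤ j →
    (1 - ((1-p)*(1-q)*(1-mh) + p*(1-q)*mh)) * pi i j =
      p*(1-q)*(1-mh) * pi (i-1) j + (1-p)*(1-q)*mh * pi (i+1) j +
      (1-p)*q*mh * pi (i+1) (j-1) + (p*q*mh + (1-p)*q*(1-mh)) * pi i (j-1) +
      p*q*(1-mh) * pi (i-1) (j-1))

set_option maxHeartbeats 1000000 in
/-- the fundamental form of the generating functions. -/
theorem fundamental_form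
    (p q mh ml : ℝ)
    (hp : p ∈ Set.Ioo (0:ℝ) 1) (hq : q ∈ Set.Ioo (0:ℝ) 1)
    (hmh : mh ∈ Set.Ioo (0:ℝ) 1) (hml : ml ∈ Set.Ioo (0:ℝ) 1)
    (hpar : p + q + mh + ml = 1)
    (hrho : p / mh + q / ml < 1)
    (pi : ℕ → ℕ → ℝ)
    (hnn : ∀ i j : ℕ, 0 ≤ pi i j)
    (hsum : HasSum (fun ij : ℕ × ℕ => pi ij.1 ij.2) 1)
    (hbal : BalanceEquations p q mh ml pi) :
    ∀ x y : ℂ, ‖x‖ ≤ 1 → ‖y‖ ≤ 1 →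
      -y * (((p:ℂ) * (1 - (mh:ℂ)) * ((q:ℂ)*y + 1 - (q:ℂ))) * x^2
            + (((p:ℂ)*(mh:ℂ) + (1 - (p:ℂ))*(1 - (mh:ℂ))) * ((q:ℂ)*y + 1 - (q:ℂ)) - 1) * x
            + ((1 - (p:ℂ))*(mh:ℂ)*((q:ℂ)*y + 1 - (q:ℂ))))
          * (∑' ij : ℕ × ℕ, (pi ij.1 ij.2 : ℂ) * x ^ ij.1 * y ^ ij.2)
        = (1 - (p:ℂ)) * ((q:ℂ)*y + 1 - (q:ℂ))
            * (((mh:ℂ) - (ml:ℂ)) * x * y - (mh:ℂ) * y + (ml:ℂ) * x)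
            * (∑' j : ℕ, (pi 0 j : ℂ) * y ^ j)
          + (1 - (p:ℂ)) * (1 - (q:ℂ)) * (ml:ℂ) * (y - 1) * x * (pi 0 0 : ℂ) := by
  intro x y hx hy
  -- complex versions of the balance equations
  have C1 : ((1:ℂ) - ((1-(p:ℂ))*(1-(q:ℂ)) + (p:ℂ)*(1-(q:ℂ))*(mh:ℂ) + (1-(p:ℂ))*(q:ℂ)*(ml:ℂ))) * (pi 0 0 : ℂ) =
      (1-(p:ℂ))*(1-(q:ℂ))*(mh:ℂ) * (pi 1 0 : ℂ) + (1-(p:ℂ))*(1-(q:ℂ))*(ml:ℂ) * (pi 0 1 : ℂ) := by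
    exact_mod_cast hbal.1
  have C2 : ∀ i : ℕ, ((1:ℂ) - ((1-(p:ℂ))*(1-(q:ℂ))*(1-(mh:ℂ)) + (p:ℂ)*(1-(q:ℂ))*(mh:ℂ))) * (pi (i+1) 0 : ℂ) =
      (p:ℂ)*(1-(q:ℂ))*(1-(mh:ℂ)) * (pi i 0 : ℂ) + (1-(p:ℂ))*(1-(q:ℂ))*(mh:ℂ) * (pi (i+2) 0 : ℂ) := by
    intro i
    have h := hbal.2.1 (i+1) (by omega)
    simp only [Nat.add_sub_cancel, show ∀ k : ℕ, k+1+1 = k+2 from fun _ => rfl] at h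
    exact_mod_cast h
  have C3 : ∀ j : ℕ, ((1:ℂ) - ((1-(p:ℂ))*(1-(q:ℂ))*(1-(ml:ℂ)) + (p:ℂ)*(1-(q:ℂ))*(mh:ℂ) + (1-(p:ℂ))*(q:ℂ)*(ml:ℂ))) * (pi 0 (j+1) : ℂ) =
      ((p:ℂ)*(q:ℂ)*(mh:ℂ) + (1-(p:ℂ))*(q:ℂ)*(1-(ml:ℂ))) * (pi 0 j : ℂ) + (1-(p:ℂ))*(1-(q:ℂ))*(ml:ℂ) * (pi 0 (j+2) : ℂ) +
      (1-(p:ℂ))*(q:ℂ)*(mh:ℂ) * (pi 1 j : ℂ) + (1-(p:ℂ))*(1-(q:ℂ))*(mh:ℂ) * (pi 1 (j+1) : ℂ) := by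
    intro j
    have h := hbal.2.2.1 (j+1) (by omega)
    simp only [Nat.add_sub_cancel, show ∀ k : ℕ, k+1+1 = k+2 from fun _ => rfl] at h
    exact_mod_cast h
  have C4 : ∀ i j : ℕ, ((1:ℂ) - ((1-(p:ℂ))*(1-(q:ℂ))*(1-(mh:ℂ)) + (p:ℂ)*(1-(q:ℂ))*(mh:ℂ))) * (pi (i+1) (j+1) : ℂ) =
      (p:ℂ)*(1-(q:ℂ))*(1-(mh:ℂ)) * (pi i (j+1) : ℂ) + (1-(p:ℂ))*(1-(q:ℂ))*(mh:ℂ) * (pi (i+2) (j+1) : ℂ) +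
      (1-(p:ℂ))*(q:ℂ)*(mh:ℂ) * (pi (i+2) j : ℂ) + ((p:ℂ)*(q:ℂ)*(mh:ℂ) + (1-(p:ℂ))*(q:ℂ)*(1-(mh:ℂ))) * (pi (i+1) j : ℂ) +
      (p:ℂ)*(q:ℂ)*(1-(mh:ℂ)) * (pi i j : ℂ) := by
    intro i j
    have h := hbal.2.2.2 (i+1) (j+1) (by omega) (by omega)
    simp only [Nat.add_sub_cancel, show ∀ k : ℕ, k+1+1 = k+2 from fun _ => rfl] at h
    exact_mod_cast h
  -- summability of the double series
  have hfs : Summable (fun ij : ℕ × ℕ => (pi ij.1 ij.2 : ℂ) * x ^ ij.1 * y ^ ij.2) := by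
    apply Summable.of_norm_bounded (g := fun ij : ℕ × ℕ => |pi ij.1 ij.2|) hsum.summable.abs
    intro ij
    have h1 : ‖x ^ ij.1‖ ≤ 1 := by
      rw [norm_pow]
      exact pow_le_one₀ (norm_nonneg _) hx
    have h2 : ‖y ^ ij.2‖ ≤ 1 := by
      rw [norm_pow]
      exact pow_le_one₀ (norm_nonneg _) hy
    calc ‖(pi ij.1 ij.2 : ℂ) * x ^ ij.1 * y ^ ij.2‖
        = ‖(pi ij.1 ij.2 : ℂ)‖ * ‖x ^ ij.1‖ * ‖y ^ ij.2‖ := by rw [norm_mul, norm_mul]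
      _ ≤ ‖(pi ij.1 ij.2 : ℂ)‖ * 1 * 1 := by gcongr <;> simp [norm_nonneg]
      _ = |pi ij.1 ij.2| := by simp [Complex.norm_real]
  set P : ℂ := ∑' ij : ℕ × ℕ, (pi ij.1 ij.2 : ℂ) * x ^ ij.1 * y ^ ij.2 with hPdef
  have hP : HasSum (fun ij : ℕ × ℕ => (pi ij.1 ij.2 : ℂ) * x ^ ij.1 * y ^ ij.2) P := hfs.hasSum
  have hψs : Summable (fun j : ℕ => (pi 0 j : ℂ) * y ^ j) := by
    have hinj : Function.Injective (fun j : ℕ => ((0:ℕ), j)) := by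
      intro a b h; simpa using h
    have h2 := hfs.comp_injective hinj
    have heq : ((fun ij : ℕ × ℕ => (pi ij.1 ij.2 : ℂ) * x ^ ij.1 * y ^ ij.2) ∘ (fun j : ℕ => ((0:ℕ), j)))
        = fun j : ℕ => (pi 0 j : ℂ) * y ^ j := by
      funext j; simp
    rwa [heq] at h2
  set Ψ : ℂ := ∑' j : ℕ, (pi 0 j : ℂ) * y ^ j with hΨdef
  have hΨ : HasSum (fun j : ℕ => (pi 0 j : ℂ) * y ^ j) Ψ := hψs.hasSum
  -- shifted double series
  have hA : ∀ s t : ℕ, HasSum (fun IJ : ℕ × ℕ =>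
      (if s ≤ IJ.1 ∧ t ≤ IJ.2 then (pi (IJ.1 - s) (IJ.2 - t) : ℂ) else 0) * x ^ IJ.1 * y ^ IJ.2)
      (x ^ s * y ^ t * P) := by
    intro s t
    have he : Function.Injective (fun ij : ℕ × ℕ => (ij.1 + s, ij.2 + t)) := by
      intro a b h
      simp only [Prod.mk.injEq] at h
      exact Prod.ext (by omega) (by omega)
    rw [← Function.Injective.hasSum_iff he ?_]
    · refine (hP.mul_left (x ^ s * y ^ t)).congr_fun ?_
      rintro ⟨i, j⟩
      have hc : s ≤ i + s ∧ t ≤ j + t := ⟨Nat.le_add_left s i, Nat.le_add_left t j⟩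
      simp only [Function.comp_apply]
      rw [if_pos hc]
      simp only [Nat.add_sub_cancel]
      rw [pow_add, pow_add]; ring
    · rintro ⟨I, J⟩ hIJ
      rw [if_neg, zero_mul, zero_mul]
      rintro ⟨h1, h2⟩
      exact hIJ (Set.mem_range.mpr ⟨(I - s, J - t), by
        simp [Nat.sub_add_cancel h1, Nat.sub_add_cancel h2]⟩)
  -- shifted boundary series
  have hB : ∀ s t : ℕ, HasSum (fun IJ : ℕ × ℕ =>
      (if IJ.1 = s ∧ t ≤ IJ.2 then (pi 0 (IJ.2 - t) : ℂ) else 0) * x ^ IJ.1 * y ^ IJ.2)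
      (x ^ s * y ^ t * Ψ) := by
    intro s t
    have he : Function.Injective (fun j : ℕ => ((s:ℕ), j + t)) := by
      intro a b h
      simp only [Prod.mk.injEq] at h
      omega
    rw [← Function.Injective.hasSum_iff he ?_]
    · refine (hΨ.mul_left (x ^ s * y ^ t)).congr_fun ?_
      intro j
      simp only [Function.comp_apply, Nat.le_add_left, true_and, if_true, Nat.add_sub_cancel]
      rw [pow_add]; ring
    · rintro ⟨I, J⟩ hIJ
      rw [if_neg, zero_mul, zero_mul]
      rintro ⟨h1, h2⟩
      exact hIJ (Set.mem_range.mpr ⟨J - t, by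
        simp [h1.symm, Nat.sub_add_cancel h2]⟩)
  -- delta series
  have hC : ∀ b : ℕ, HasSum (fun IJ : ℕ × ℕ =>
      (if IJ.1 = 1 ∧ IJ.2 = b then (pi 0 0 : ℂ) else 0) * x ^ IJ.1 * y ^ IJ.2)
      ((pi 0 0 : ℂ) * x ^ 1 * y ^ b) := by
    intro b
    refine (hasSum_ite_eq ((1:ℕ), b) ((pi 0 0 : ℂ) * x ^ 1 * y ^ b)).congr_fun ?_
    rintro ⟨I, J⟩
    by_cases h : I = 1 ∧ J = b
    · obtain ⟨rfl, rfl⟩ := h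
      simp
    · rw [if_neg h, if_neg (by simp only [Prod.mk.injEq]; exact h), zero_mul, zero_mul]
  -- the two grand sums
  have hLsum := (hA 1 1).sub (((((((hA 2 2).mul_left ((p:ℂ)*(1-(mh:ℂ))*(q:ℂ))).add
      ((hA 2 1).mul_left ((p:ℂ)*(1-(mh:ℂ))*(1-(q:ℂ))))).add
      ((hA 1 2).mul_left (((p:ℂ)*(mh:ℂ)+(1-(p:ℂ))*(1-(mh:ℂ)))*(q:ℂ)))).add
      ((hA 1 1).mul_left (((p:ℂ)*(mh:ℂ)+(1-(p:ℂ))*(1-(mh:ℂ)))*(1-(q:ℂ))))).add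
      ((hA 0 2).mul_left ((1-(p:ℂ))*(mh:ℂ)*(q:ℂ)))).add
      ((hA 0 1).mul_left ((1-(p:ℂ))*(mh:ℂ)*(1-(q:ℂ)))))
  have hRsum := (((((((hB 1 2).mul_left ((1-(p:ℂ))*((mh:ℂ)-(ml:ℂ))*(q:ℂ))).add
      ((hB 1 1).mul_left ((1-(p:ℂ))*((mh:ℂ)-(ml:ℂ))*(1-(q:ℂ))))).sub
      ((hB 0 2).mul_left ((1-(p:ℂ))*(mh:ℂ)*(q:ℂ)))).sub
      ((hB 0 1).mul_left ((1-(p:ℂ))*(mh:ℂ)*(1-(q:ℂ))))).add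
      (((hB 1 1).mul_left ((1-(p:ℂ))*(ml:ℂ)*(q:ℂ))).add
       ((hB 1 0).mul_left ((1-(p:ℂ))*(ml:ℂ)*(1-(q:ℂ)))))).add
      ((hC 1).mul_left ((1-(p:ℂ))*(1-(q:ℂ))*(ml:ℂ)))).sub
      ((hC 0).mul_left ((1-(p:ℂ))*(1-(q:ℂ))*(ml:ℂ)))
  have hzero : HasSum (fun _ : ℕ × ℕ => (0:ℂ)) _ := (hLsum.sub hRsum).congr_fun ?_
  · have key := (sub_eq_zero.mp (hasSum_zero.unique hzero).symm)
    linear_combination key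
  · rintro ⟨I, J⟩
    show (0:ℂ) = _
    beta_reduce
    rcases I with _ | _ | i <;> rcases J with _ | _ | j <;>
      norm_num [show ∀ k : ℕ, k+1+1 = k+2 from fun _ => rfl,
        show ∀ k : ℕ, k+2-1 = k+1 from fun _ => rfl,
        show ∀ k : ℕ, k+2-2 = k from fun _ => rfl,
        Nat.add_sub_cancel, Nat.sub_zero, Nat.zero_le, Nat.le_add_left,
        show ∀ k : ℕ, ¬(k+2 = 1) from by omega,
        show ∀ k : ℕ, ¬(k+2 = 0) from by omega]
    · ring
    · ring
    · linear_combination (-(x*y)) * C1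
    · linear_combination (-(x*y^(j+2))) * C3 j
    · linear_combination (-(x^(i+2)*y)) * C2 i
    · linear_combination (-(x^(i+2)*y^(j+2))) * C4 i j
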